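/- arXiv:1605.06634 — 2 statements merged into one kernel-verified Lean document; each statement's English description precedes it below -/
import Mathlib

section
/- Let N ≥ 2 and 0 < a < b. Suppose φ : [a,b] → ℝ is piecewise C¹ with φ(a) = φ(b) = 0, φ not identically zero, and suppose u : [a,b] → ℝ is a continuous, piecewise C² function with u(a) = u(b) = 0 such that on each of finitely many subintervals [r_{i-1}, r_i] partitioning [a,b], either -u'' - ((N-1)/r) u' = |u|^{p-1} u with u nonzero on (r_{i-1}, r_i), or u ≡ 0. If φ = Σᵢ cᵢ uᵢ where uᵢ is the restriction of u to [r_{i-1}, r_i] extended by zero, then ∫_a^b r^{N-1}(|φ'|² - p|u|^{p-1}φ²) dr = (1-p) Σᵢ cᵢ² ∫_{r_{i-1}}^{r_i} r^{N-1} |u'|² dr, which is strictly negative for p > 1 when some cᵢ ≠ 0. -/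
open Set MeasureTheory

/-- The piecewise combination `φ = Σᵢ cᵢ uᵢ`, where `uᵢ` is the restriction of `u` to the
nodal interval `(r_{i-1}, r_i)` extended by zero. -/
noncomputable def piecedComb (m : ℕ) (r : Fin (m + 1) → ℝ) (u : ℝ → ℝ)
    (c : Fin m → ℝ) : ℝ → ℝ :=
  fun x => ∑ i : Fin m, c i * Set.indicator (Set.Ioo (r i.castSucc) (r i.succ)) u x

/-- For a nodal radial solution `u` (solving the Lane-Emden ODE and
nonvanishing on each nodal interval), and `φ = Σᵢ cᵢ uᵢ` the piecewise combination of its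
nodal components, the quadratic form satisfies
`∫ r^{N-1}(|φ'|² - p|u|^{p-1}φ²) = (1-p) Σᵢ cᵢ² ∫ r^{N-1}|u'|²`, which is strictly
negative when `p > 1` and some `cᵢ ≠ 0`. -/
theorem quadratic_form_on_nodal_components
    (N m : ℕ) (hN : 2 ≤ N) (hm : 1 ≤ m) (p a b : ℝ) (hp : 1 < p)
    (ha : 0 < a) (hab : a < b)
    (r : Fin (m + 1) → ℝ) (hr0 : r 0 = a) (hrm : r (Fin.last m) = b)
    (hmono : StrictMono r)
    (u : ℝ → ℝ) (hu : ContDiffOn ℝ 1 u (Set.Icc a b))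
    (hu2 : ∀ i : Fin m, ContDiffOn ℝ 2 u (Set.Ioo (r i.castSucc) (r i.succ)))
    (huz : ∀ i, u (r i) = 0)
    (hode : ∀ i : Fin m, ∀ x ∈ Set.Ioo (r i.castSucc) (r i.succ),
      (-(deriv (deriv u) x) - ((N - 1 : ℝ) / x) * deriv u x = |u x| ^ (p - 1) * u x)
        ∧ u x ≠ 0)
    (c : Fin m → ℝ) :
    (∫ x in Set.Ioo a b, x ^ (N - 1) *
        ((deriv (piecedComb m r u c) x) ^ 2
          - p * |u x| ^ (p - 1) * (piecedComb m r u c x) ^ 2))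
      = (1 - p) * ∑ i : Fin m, (c i) ^ 2 *
          ∫ x in Set.Ioo (r i.castSucc) (r i.succ), x ^ (N - 1) * (deriv u x) ^ 2
    ∧ ((∃ i, c i ≠ 0) →
        (∫ x in Set.Ioo a b, x ^ (N - 1) *
          ((deriv (piecedComb m r u c) x) ^ 2
            - p * |u x| ^ (p - 1) * (piecedComb m r u c x) ^ 2)) < 0) := by
  obtain ⟨n, rfl⟩ : ∃ n, N = n + 2 := ⟨N - 2, by omega⟩
  have hN1 : n + 2 - 1 = n + 1 := by omega
  rw [hN1]
  set D : ℝ → ℝ := derivWithin u (Set.Icc a b) with hD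
  set φ := piecedComb m r u c with hφ
  -- basic interval facts
  have hra : ∀ i : Fin (m+1), a ≤ r i := fun i => hr0 ▸ hmono.monotone (Fin.zero_le i)
  have hrb : ∀ i : Fin (m+1), r i ≤ b := fun i => hrm ▸ hmono.monotone (Fin.le_last i)
  have hsub : ∀ i : Fin m, Ioo (r i.castSucc) (r i.succ) ⊆ Ioo a b := by
    intro i x hx
    exact ⟨lt_of_le_of_lt (hra _) hx.1, lt_of_lt_of_le hx.2 (hrb _)⟩
  have hlt : ∀ i : Fin m, r i.castSucc < r i.succ := fun i => hmono Fin.castSucc_lt_succ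
  have hIccsub : ∀ i : Fin m, Icc (r i.castSucc) (r i.succ) ⊆ Icc a b := by
    intro i; exact Icc_subset_Icc (hra _) (hrb _)
  have hxpos : ∀ x ∈ Ioo a b, (0:ℝ) < x := fun x hx => lt_trans ha hx.1
  -- continuity facts
  have hIcc : UniqueDiffOn ℝ (Icc a b) := uniqueDiffOn_Icc hab
  have hucont : ContinuousOn u (Icc a b) := hu.continuousOn
  have hDcont : ContinuousOn D (Icc a b) := hu.continuousOn_derivWithin hIcc le_rfl
  have hqcont : ContinuousOn (fun x => |u x| ^ (p - 1)) (Icc a b) :=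
    (hucont.abs).rpow_const (fun x _ => Or.inr (by linarith))
  have hderiv_eq : ∀ x ∈ Ioo a b, deriv u x = D x := by
    intro x hx
    exact (derivWithin_of_mem_nhds (Icc_mem_nhds hx.1 hx.2)).symm
  -- the nice functions
  set g1 : ℝ → ℝ := fun x => x ^ (n+1) * (D x) ^ 2 with hg1
  set g2 : ℝ → ℝ := fun x => x ^ (n+1) * |u x| ^ (p - 1) * (u x) ^ 2 with hg2
  have hg1cont : ContinuousOn g1 (Icc a b) :=
    (continuousOn_pow _).mul (hDcont.pow 2)
  have hg2cont : ContinuousOn g2 (Icc a b) :=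
    (((continuousOn_pow _).mul hqcont).mul (hucont.pow 2))
  have hg1int : ∀ i : Fin m, IntegrableOn g1 (Ioo (r i.castSucc) (r i.succ)) :=
    fun i => (hg1cont.integrableOn_Icc.mono_set (hIccsub i)).mono_set Ioo_subset_Icc_self
  have hg2int : ∀ i : Fin m, IntegrableOn g2 (Ioo (r i.castSucc) (r i.succ)) :=
    fun i => (hg2cont.integrableOn_Icc.mono_set (hIccsub i)).mono_set Ioo_subset_Icc_self
  -- disjointness
  have hdisj : ∀ i j : Fin m, i ≠ j →
      Disjoint (Ioo (r i.castSucc) (r i.succ)) (Ioo (r j.castSucc) (r j.succ)) := by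
    have key : ∀ i j : Fin m, i < j →
        Disjoint (Ioo (r i.castSucc) (r i.succ)) (Ioo (r j.castSucc) (r j.succ)) := by
      intro i j hij
      have h1 : r i.succ ≤ r j.castSucc := hmono.monotone (Fin.succ_le_castSucc_iff.mpr hij)
      rw [Set.disjoint_left]
      intro x hx hx'
      exact absurd (lt_of_lt_of_le hx.2 h1) (not_lt.mpr (le_of_lt hx'.1))
    intro i j hij
    rcases lt_or_gt_of_ne hij with h | h
    · exact key i j h
    · exact (key j i h).symm
  have hdisjIoc : ∀ i j : Fin m, i ≠ j →
      Disjoint (Ioc (r i.castSucc) (r i.succ)) (Ioc (r j.castSucc) (r j.succ)) := by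
    have key : ∀ i j : Fin m, i < j →
        Disjoint (Ioc (r i.castSucc) (r i.succ)) (Ioc (r j.castSucc) (r j.succ)) := by
      intro i j hij
      have h1 : r i.succ ≤ r j.castSucc := hmono.monotone (Fin.succ_le_castSucc_iff.mpr hij)
      rw [Set.disjoint_left]
      intro x hx hx'
      exact absurd (le_trans hx.2 h1) (not_le.mpr hx'.1)
    intro i j hij
    rcases lt_or_gt_of_ne hij with h | h
    · exact key i j h
    · exact (key j i h).symm
  -- local identification of φ on each nodal interval
  have hloc : ∀ i : Fin m, ∀ x ∈ Ioo (r i.castSucc) (r i.succ),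
      φ =ᶠ[nhds x] fun y => c i * u y := by
    intro i x hx
    filter_upwards [isOpen_Ioo.mem_nhds hx] with y hy
    show piecedComb m r u c y = c i * u y
    unfold piecedComb
    rw [Finset.sum_eq_single i]
    · rw [Set.indicator_of_mem hy]
    · intro j _ hj
      rw [Set.indicator_of_notMem, mul_zero]
      exact fun hmem => Set.disjoint_left.mp (hdisj j i hj) hmem hy
    · intro h; exact absurd (Finset.mem_univ i) h
  have hval : ∀ i : Fin m, ∀ x ∈ Ioo (r i.castSucc) (r i.succ), φ x = c i * u x :=
    fun i x hx => (hloc i x hx).eq_of_nhds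
  have hder : ∀ i : Fin m, ∀ x ∈ Ioo (r i.castSucc) (r i.succ),
      deriv φ x = c i * deriv u x := by
    intro i x hx
    rw [(hloc i x hx).deriv_eq, deriv_const_mul_field]
  -- the integrand
  set f : ℝ → ℝ := fun x => x ^ (n+1) *
      ((deriv φ x) ^ 2 - p * |u x| ^ (p - 1) * (φ x) ^ 2) with hf
  have hfnice : ∀ i : Fin m, ∀ x ∈ Ioo (r i.castSucc) (r i.succ),
      f x = (c i)^2 * (g1 x - p * g2 x) := by
    intro i x hx
    have h1 := hval i x hx
    have h2 := hder i x hx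
    have h3 := hderiv_eq x (hsub i hx)
    simp only [hf, hg1, hg2, h1, h2, h3]
    ring
  -- integration by parts on each nodal interval
  have hibp : ∀ i : Fin m,
      (∫ x in Ioo (r i.castSucc) (r i.succ), g1 x) =
      (∫ x in Ioo (r i.castSucc) (r i.succ), g2 x) := by
    intro i
    set α := r i.castSucc with hα
    set β := r i.succ with hβ
    have hαβ : α < β := hlt i
    set F : ℝ → ℝ := fun x => x ^ (n+1) * (D x * u x) with hF
    have hFcont : ContinuousOn F (Icc α β) :=
      ((continuousOn_pow _).mul ((hDcont.mono (hIccsub i)).mul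
        (hucont.mono (hIccsub i))))
    have hFd : ∀ x ∈ Ioo α β, HasDerivAt F (g1 x - g2 x) x := by
      intro x hx
      have hxab : x ∈ Ioo a b := hsub i hx
      have hx0 : (0:ℝ) < x := hxpos x hxab
      have hud : HasDerivAt u (deriv u x) x := by
        have := ((hu2 i).differentiableOn (by norm_num)).differentiableAt
          (isOpen_Ioo.mem_nhds hx)
        exact this.hasDerivAt
      have hudd : HasDerivAt (deriv u) (deriv (deriv u) x) x := by
        have h1 : ContDiffOn ℝ 1 (deriv u) (Ioo α β) :=
          (hu2 i).deriv_of_isOpen isOpen_Ioo (by norm_num)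
        have := (h1.differentiableOn (by norm_num)).differentiableAt
          (isOpen_Ioo.mem_nhds hx)
        exact this.hasDerivAt
      have hF2 : HasDerivAt (fun y => y ^ (n+1) * (deriv u y * u y))
          ((((n:ℝ)+1) * x ^ n) * (deriv u x * u x)
            + x ^ (n+1) * (deriv (deriv u) x * u x + deriv u x * deriv u x)) x := by
        have hpow : HasDerivAt (fun y : ℝ => y ^ (n+1)) (((n:ℝ)+1) * x ^ n) x := by
          have := hasDerivAt_pow (n+1) x
          simpa using this
        exact hpow.mul (hudd.mul hud)
      have heq : F =ᶠ[nhds x] fun y => y ^ (n+1) * (deriv u y * u y) := by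
        filter_upwards [isOpen_Ioo.mem_nhds hxab] with y hy
        simp only [hF, hderiv_eq y hy]
      have hF3 : HasDerivAt F ((((n:ℝ)+1) * x ^ n) * (deriv u x * u x)
            + x ^ (n+1) * (deriv (deriv u) x * u x + deriv u x * deriv u x)) x :=
        hF2.congr_of_eventuallyEq heq
      have hODE := (hode i x hx).1
      have hval2 : deriv (deriv u) x
          = -(((n:ℝ)+1) / x) * deriv u x - |u x| ^ (p - 1) * u x := by
        have hc : ((n + 2 : ℕ) : ℝ) - 1 = (n:ℝ) + 1 := by push_cast; ring
        rw [hc] at hODE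
        linarith
      have hkey : (((n:ℝ)+1) * x ^ n) * (deriv u x * u x)
            + x ^ (n+1) * (deriv (deriv u) x * u x + deriv u x * deriv u x)
          = g1 x - g2 x := by
        simp only [hg1, hg2]
        rw [hval2, ← hderiv_eq x hxab]
        have hxne : x ≠ 0 := ne_of_gt hx0
        field_simp
        ring
      rwa [hkey] at hF3
    have hint : IntervalIntegrable (fun x => g1 x - g2 x) volume α β := by
      apply ContinuousOn.intervalIntegrable
      have huicc : uIcc α β = Icc α β := uIcc_of_le (le_of_lt hαβ)
      rw [huicc]
      exact ((hg1cont.mono (hIccsub i)).sub (hg2cont.mono (hIccsub i)))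
    have hFTC := intervalIntegral.integral_eq_sub_of_hasDeriv_right_of_le
      (le_of_lt hαβ) hFcont
      (fun x hx => (hFd x hx).hasDerivWithinAt) hint
    have hFα : F α = 0 := by
      have h0 : u α = 0 := huz i.castSucc
      simp [hF, h0]
    have hFβ : F β = 0 := by
      have h0 : u β = 0 := huz i.succ
      simp [hF, h0]
    rw [hFα, hFβ, sub_zero, intervalIntegral.integral_of_le (le_of_lt hαβ)] at hFTC
    have hIocIoo : (∫ x in Ioc α β, (g1 x - g2 x)) = ∫ x in Ioo α β, (g1 x - g2 x) :=
      setIntegral_congr_set Ioo_ae_eq_Ioc.symm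
    rw [hIocIoo, integral_sub (hg1int i) (hg2int i)] at hFTC
    linarith
  -- positivity of each nodal energy
  have hEnn : ∀ i : Fin m,
      0 ≤ ∫ x in Ioo (r i.castSucc) (r i.succ), x ^ (n+1) * (deriv u x) ^ 2 := by
    intro i
    apply setIntegral_nonneg measurableSet_Ioo
    intro x hx
    have := hxpos x (hsub i hx)
    positivity
  have hEeq : ∀ i : Fin m,
      (∫ x in Ioo (r i.castSucc) (r i.succ), x ^ (n+1) * (deriv u x) ^ 2)
        = ∫ x in Ioo (r i.castSucc) (r i.succ), g1 x := by
    intro i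
    apply setIntegral_congr_fun measurableSet_Ioo
    intro x hx
    simp only [hg1, hderiv_eq x (hsub i hx)]
  have hEpos : ∀ i : Fin m,
      0 < ∫ x in Ioo (r i.castSucc) (r i.succ), x ^ (n+1) * (deriv u x) ^ 2 := by
    intro i
    rw [hEeq i, hibp i]
    have hnn : 0 ≤ᶠ[ae (volume.restrict (Ioo (r i.castSucc) (r i.succ)))] g2 := by
      filter_upwards [ae_restrict_mem measurableSet_Ioo] with x hx
      have hx0 := hxpos x (hsub i hx)
      simp only [hg2, Pi.zero_apply]
      positivity
    rw [setIntegral_pos_iff_support_of_nonneg_ae hnn (hg2int i)]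
    · have hsupp : Ioo (r i.castSucc) (r i.succ) ⊆
          Function.support g2 ∩ Ioo (r i.castSucc) (r i.succ) := by
        intro x hx
        refine ⟨?_, hx⟩
        have hx0 := hxpos x (hsub i hx)
        have hune := (hode i x hx).2
        simp only [Function.mem_support, hg2]
        positivity
      calc (0:ENNReal) < volume (Ioo (r i.castSucc) (r i.succ)) := by
            rw [Real.volume_Ioo]
            simp [hlt i]
        _ ≤ volume (Function.support g2 ∩ Ioo (r i.castSucc) (r i.succ)) :=
            measure_mono hsupp
  -- per-interval value of the quadratic form
  have hnice_int : ∀ i : Fin m, IntegrableOn (fun x => (c i)^2 * (g1 x - p * g2 x))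
      (Ioc (r i.castSucc) (r i.succ)) := by
    intro i
    have h1 : IntegrableOn (fun x => (c i)^2 * (g1 x - p * g2 x))
        (Icc (r i.castSucc) (r i.succ)) := by
      apply ContinuousOn.integrableOn_Icc
      exact (((hg1cont.mono (hIccsub i)).sub
        ((hg2cont.mono (hIccsub i)).const_smul p)).const_smul ((c i)^2))
    exact h1.mono_set Ioc_subset_Icc_self
  have hae : ∀ i : Fin m, f =ᵐ[volume.restrict (Ioc (r i.castSucc) (r i.succ))]
      fun x => (c i)^2 * (g1 x - p * g2 x) := by
    intro i
    rw [Measure.restrict_congr_set Ioo_ae_eq_Ioc.symm]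
    filter_upwards [ae_restrict_mem measurableSet_Ioo] with x hx
    exact hfnice i x hx
  have hfint : ∀ i : Fin m, IntegrableOn f (Ioc (r i.castSucc) (r i.succ)) :=
    fun i => (hnice_int i).congr_fun_ae (hae i).symm
  have hperint : ∀ i : Fin m,
      (∫ x in Ioc (r i.castSucc) (r i.succ), f x)
        = (1 - p) * ((c i)^2 *
            ∫ x in Ioo (r i.castSucc) (r i.succ), x ^ (n+1) * (deriv u x) ^ 2) := by
    intro i
    rw [integral_congr_ae (hae i),
      setIntegral_congr_set Ioo_ae_eq_Ioc.symm,
      integral_const_mul,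
      integral_sub (hg1int i) ((hg2int i).const_mul p),
      integral_const_mul, ← hibp i, hEeq i]
    ring
  -- splitting the main integral
  have hIoceq : Ioc a b = ⋃ i : Fin m, Ioc (r i.castSucc) (r i.succ) := by
    ext x
    simp only [Set.mem_iUnion]
    constructor
    · intro hx
      have hne : (Finset.univ.filter (fun k : Fin (m+1) => x ≤ r k)).Nonempty :=
        ⟨Fin.last m, by simp [hrm, hx.2]⟩
      set k := (Finset.univ.filter (fun k : Fin (m+1) => x ≤ r k)).min' hne with hk
      have hkmem : x ≤ r k := by
        have := (Finset.univ.filter (fun k : Fin (m+1) => x ≤ r k)).min'_mem hne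
        rw [Finset.mem_filter] at this
        exact this.2
      have hk0 : k ≠ 0 := by
        intro h
        rw [h, hr0] at hkmem
        exact absurd hx.1 (not_lt.mpr hkmem)
      obtain ⟨j, hj⟩ := Fin.exists_succ_eq.mpr hk0
      refine ⟨j, ?_, by rw [hj]; exact hkmem⟩
      by_contra hcon
      push_neg at hcon
      have hmem2 : j.castSucc ∈ Finset.univ.filter (fun k : Fin (m+1) => x ≤ r k) := by
        simp [hcon]
      have hge : k ≤ j.castSucc := hk ▸ Finset.min'_le _ _ hmem2
      rw [← hj] at hge
      exact absurd hge (not_le.mpr Fin.castSucc_lt_succ)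
    · rintro ⟨i, hx⟩
      exact ⟨lt_of_le_of_lt (hra _) hx.1, le_trans hx.2 (hrb _)⟩
  have hsplit : (∫ x in Ioo a b, f x)
      = ∑ i : Fin m, ∫ x in Ioc (r i.castSucc) (r i.succ), f x := by
    rw [setIntegral_congr_set Ioo_ae_eq_Ioc, hIoceq]
    have hbi : (⋃ i : Fin m, Ioc (r i.castSucc) (r i.succ))
        = ⋃ i ∈ (Finset.univ : Finset (Fin m)), Ioc (r i.castSucc) (r i.succ) := by simp
    rw [hbi, integral_biUnion_finset Finset.univ (fun i _ => measurableSet_Ioc)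
      (fun i _ j _ hij => hdisjIoc i j hij) (fun i _ => hfint i)]
  -- the main identity
  have hmain : (∫ x in Ioo a b, f x)
      = (1 - p) * ∑ i : Fin m, (c i) ^ 2 *
          ∫ x in Ioo (r i.castSucc) (r i.succ), x ^ (n+1) * (deriv u x) ^ 2 := by
    rw [hsplit, Finset.mul_sum]
    exact Finset.sum_congr rfl (fun i _ => hperint i)
  refine ⟨hmain, ?_⟩
  rintro ⟨i, hci⟩
  rw [hmain]
  apply mul_neg_of_neg_of_pos (by linarith)
  apply Finset.sum_pos'
  · intro j _
    exact mul_nonneg (sq_nonneg _) (hEnn j)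
  · exact ⟨i, Finset.mem_univ i, mul_pos (pow_two_pos_of_ne_zero hci) (hEpos i)⟩
end

section
/- Let 0 < a < b, N ≥ 2, p > 1, and let u₁, …, u_m be nonzero functions on [a,b] with pairwise disjoint supports contained in subintervals [r_{i-1}, r_i] (a = r₀ < r₁ < ⋯ < r_m = b), each satisfying ∫ r^{N-1}|uᵢ'|² dr = ∫ r^{N-1}|uᵢ|^{p+1} dr. Then for every nonzero φ = Σ cᵢ uᵢ, the Rayleigh quotient [∫_a^b r^{N-1}(|φ'|² - p|φ|_{*}φ²)] / [∫_a^b r^{N-3}φ²] — where the potential p|v|^{p-1} restricted to supp(uᵢ) equals p uᵢ^{p-1} — satisfies the bound ≤ (1-p) a² λ₁, where λ₁ > 0 is the first Dirichlet eigenvalue of -Δ on the annulus A(a,b) restricted to radial functions. Consequently, the m-th min-max eigenvalue ν_m(p) ≤ (1-p) a² λ₁ → -∞ as p → +∞. -/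
open Set MeasureTheory Filter

/-- Membership in (a C¹ model of) the radial space `H¹₀((a,b))`. -/
def memH10 (a b : ℝ) (φ : ℝ → ℝ) : Prop :=
  ContDiffOn ℝ 1 φ (Set.Icc a b) ∧ φ a = 0 ∧ φ b = 0 ∧ ∀ x, x ∉ Set.Icc a b → φ x = 0

/-- The numerator of the Rayleigh quotient:
`Q(φ) = ∫ r^{N-1}(|φ'|² - p|v|^{p-1}φ²)`. -/
noncomputable def rayleighNum (N : ℕ) (p a b : ℝ) (v φ : ℝ → ℝ) : ℝ :=
  ∫ x in Set.Ioo a b, x ^ (N - 1) * ((deriv φ x) ^ 2 - p * |v x| ^ (p - 1) * (φ x) ^ 2)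

/-- The denominator of the Rayleigh quotient: `D(φ) = ∫ r^{N-3}φ²`. -/
noncomputable def rayleighDen (N : ℕ) (a b : ℝ) (φ : ℝ → ℝ) : ℝ :=
  ∫ x in Set.Ioo a b, (x ^ (N - 1) / x ^ 2) * (φ x) ^ 2

/-- The `l`-th min-max eigenvalue `ν_l` (see Statement 15). -/
noncomputable def nuMinMax (N : ℕ) (p a b : ℝ) (v : ℝ → ℝ) (l : ℕ) : ℝ :=
  sInf { t : ℝ | ∃ ψ : Fin l → ℝ → ℝ, (∀ i, memH10 a b (ψ i))
    ∧ LinearIndependent ℝ ψ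
    ∧ ∀ c : Fin l → ℝ, (∑ i, c i • ψ i) ≠ 0 →
        rayleighNum N p a b v (∑ i, c i • ψ i)
          / rayleighDen N a b (∑ i, c i • ψ i) ≤ t }

lemma L_integrable {a b : ℝ} {f : ℝ → ℝ} {C : ℝ} (hc : ContinuousOn f (Set.Ioo a b))
    (hb : ∀ x ∈ Set.Ioo a b, |f x| ≤ C) : IntegrableOn f (Set.Ioo a b) := by
  refine ⟨hc.aestronglyMeasurable measurableSet_Ioo, ?_⟩
  exact HasFiniteIntegral.restrict_of_bounded (C := C) measure_Ioo_lt_top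
    ((ae_restrict_iff' measurableSet_Ioo).mpr (ae_of_all _ (by
      simpa [Real.norm_eq_abs] using hb)))

lemma L_bdd {a b : ℝ} {f : ℝ → ℝ} (hf : ContinuousOn f (Set.Icc a b)) :
    ∃ C, 0 ≤ C ∧ ∀ x ∈ Set.Ioo a b, |f x| ≤ C := by
  obtain ⟨C, hC⟩ := (isCompact_Icc (a := a) (b := b)).exists_bound_of_continuousOn hf
  exact ⟨max C 0, le_max_right _ _, fun x hx => le_trans (by
    simpa [Real.norm_eq_abs] using hC x (Ioo_subset_Icc_self hx)) (le_max_left _ _)⟩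

lemma L_derivWithin_eq {a b x : ℝ} (hx : x ∈ Set.Ioo a b) (f : ℝ → ℝ) :
    deriv f x = derivWithin f (Set.Icc a b) x :=
  (derivWithin_of_mem_nhds (Icc_mem_nhds hx.1 hx.2)).symm

lemma L_deriv_cont {a b : ℝ} (hab : a < b) {f : ℝ → ℝ} (hf : ContDiffOn ℝ 1 f (Set.Icc a b)) :
    ContinuousOn (deriv f) (Set.Ioo a b) ∧ ∃ C, 0 ≤ C ∧ ∀ x ∈ Set.Ioo a b, |deriv f x| ≤ C := by
  have hD : ContinuousOn (derivWithin f (Set.Icc a b)) (Set.Icc a b) :=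
    hf.continuousOn_derivWithin (uniqueDiffOn_Icc hab) le_rfl
  have heq : ∀ x ∈ Set.Ioo a b, derivWithin f (Set.Icc a b) x = deriv f x :=
    fun x hx => (L_derivWithin_eq hx f).symm
  constructor
  · exact ((hD.mono Ioo_subset_Icc_self).congr fun x hx => (heq x hx).symm)
  · obtain ⟨C, hC0, hC⟩ := L_bdd hD
    exact ⟨C, hC0, fun x hx => (heq x hx) ▸ hC x hx⟩

lemma L_diffAt {a b x : ℝ} (hx : x ∈ Set.Ioo a b) {f : ℝ → ℝ}
    (hf : ContDiffOn ℝ 1 f (Set.Icc a b)) : DifferentiableAt ℝ f x :=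
  (hf.differentiableOn one_ne_zero).differentiableAt (Icc_mem_nhds hx.1 hx.2)

lemma L_pos_int {f : ℝ → ℝ} {a b x₀ : ℝ} (hx₀ : x₀ ∈ Set.Ioo a b)
    (hint : IntegrableOn f (Set.Ioo a b)) (h0 : ∀ x ∈ Set.Ioo a b, 0 ≤ f x)
    (hne : ∀ᶠ y in nhds x₀, f y ≠ 0) : 0 < ∫ x in Set.Ioo a b, f x := by
  rw [setIntegral_pos_iff_support_of_nonneg_ae
    ((ae_restrict_iff' measurableSet_Ioo).mpr (ae_of_all _ h0)) hint]
  have hmem : (Function.support f ∩ Set.Ioo a b) ∈ nhds x₀ := by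
    filter_upwards [hne, Ioo_mem_nhds hx₀.1 hx₀.2] with y h1 h2 using ⟨h1, h2⟩
  obtain ⟨ε, hε, hball⟩ := Metric.mem_nhds_iff.mp hmem
  calc (0:ENNReal) < volume (Metric.ball x₀ ε) := by
        rw [Real.volume_ball]; exact ENNReal.ofReal_pos.mpr (by linarith)
    _ ≤ _ := measure_mono hball

lemma L_mul_bound {x y X Y : ℝ} (hx : |x| ≤ X) (hy : |y| ≤ Y) : |x * y| ≤ X * Y := by
  rw [abs_mul]; exact mul_le_mul hx hy (abs_nonneg _) ((abs_nonneg x).trans hx)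

lemma L_sq_bound {y C : ℝ} (h : |y| ≤ C) : |y ^ 2| ≤ C ^ 2 := by
  rw [abs_pow]; exact pow_le_pow_left₀ (abs_nonneg _) h 2


lemma L_key {m : ℕ} {a b x : ℝ} (r : Fin (m + 1) → ℝ) (hr0 : r 0 = a)
    (hrm : r (Fin.last m) = b) (hmono : StrictMono r) (hx : x ∈ Set.Ioo a b)
    (hxr : x ∉ Set.range r) : ∃ j : Fin m, x ∈ Set.Ioo (r j.castSucc) (r j.succ) := by
  classical
  have hm0 : 0 < m + 1 := Nat.succ_pos m
  set T : Finset (Fin (m + 1)) := Finset.univ.filter (fun i => r i < x) with hT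
  have h0T : (0 : Fin (m + 1)) ∈ T := by
    simp [hT, hr0, hx.1]
  have hTne : T.Nonempty := ⟨0, h0T⟩
  set i₀ := T.max' hTne with hi₀
  have hi₀T : i₀ ∈ T := T.max'_mem hTne
  have hri₀ : r i₀ < x := by simpa [hT] using hi₀T
  have hne_last : i₀ ≠ Fin.last m := by
    intro h
    rw [h, hrm] at hri₀
    exact absurd hx.2 (not_lt.mpr hri₀.le)
  obtain ⟨j, hj⟩ := Fin.exists_castSucc_eq.mpr hne_last
  refine ⟨j, by rw [hj]; exact hri₀, ?_⟩
  by_contra hcon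
  push_neg at hcon
  have hne : r j.succ ≠ x := fun h => hxr ⟨j.succ, h⟩
  have hlt : r j.succ < x := lt_of_le_of_ne hcon hne
  have hmem : j.succ ∈ T := by simp [hT, hlt]
  have hle : j.succ ≤ i₀ := T.le_max' _ hmem
  rw [← hj] at hle
  exact absurd hle (not_le.mpr (Fin.castSucc_lt_succ (i := j)))

lemma L_disj {m : ℕ} (r : Fin (m + 1) → ℝ) (hmono : StrictMono r) {j j' : Fin m}
    (hne : j' ≠ j) {y : ℝ} (hy : y ∈ Set.Ioo (r j.castSucc) (r j.succ)) :
    y ∉ Set.Icc (r j'.castSucc) (r j'.succ) := by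
  intro hmem
  rcases lt_or_gt_of_ne hne with h | h
  · have h1 : r j'.succ ≤ r (j.castSucc) := hmono.monotone (Fin.succ_le_castSucc_iff.mpr h)
    exact absurd (hmem.2.trans h1) (not_le.mpr hy.1)
  · have h1 : r j.succ ≤ r (j'.castSucc) := hmono.monotone (Fin.succ_le_castSucc_iff.mpr h)
    exact absurd (h1.trans hmem.1) (not_le.mpr hy.2)


/-- Let `u₁, …, u_m` be the nodal components (supported in consecutive
subintervals, each satisfying the Nehari identity `∫ r^{N-1}|uᵢ'|² = ∫ r^{N-1}|uᵢ|^{p+1}`,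
with `|v| = |uᵢ|` on `supp uᵢ`).  Then every nonzero combination `φ = Σ cᵢ uᵢ` has
Rayleigh quotient at most `(1-p) a² λ₁`, where `λ₁ > 0` is the first radial Dirichlet
eigenvalue; consequently `ν_m(p) ≤ (1-p) a² λ₁ → -∞` as `p → +∞`. -/
theorem mth_eigenvalue_diverges
    (N m : ℕ) (hN : 2 ≤ N) (hm : 1 ≤ m) (p a b lam1 : ℝ) (hp : 1 < p) (ha : 0 < a)
    (hab : a < b) (hlam : 0 < lam1)
    (hpoincare : ∀ φ : ℝ → ℝ, memH10 a b φ →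
      lam1 * ∫ x in Set.Ioo a b, x ^ (N - 1) * (φ x) ^ 2
        ≤ ∫ x in Set.Ioo a b, x ^ (N - 1) * (deriv φ x) ^ 2)
    (v : ℝ → ℝ) (hv : ContinuousOn v (Set.Icc a b))
    (r : Fin (m + 1) → ℝ) (hr0 : r 0 = a) (hrm : r (Fin.last m) = b)
    (hmono : StrictMono r)
    (u : Fin m → ℝ → ℝ) (huH : ∀ i, memH10 a b (u i)) (hu0 : ∀ i, u i ≠ 0)
    (hsupp : ∀ i : Fin m, Function.support (u i) ⊆ Set.Icc (r i.castSucc) (r i.succ))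
    (hvu : ∀ i, ∀ x ∈ Function.support (u i), |v x| = |u i x|)
    (hnehari : ∀ i, (∫ x in Set.Ioo a b, x ^ (N - 1) * (deriv (u i) x) ^ 2)
      = ∫ x in Set.Ioo a b, x ^ (N - 1) * |u i x| ^ (p + 1)) :
    (∀ c : Fin m → ℝ, (∃ i, c i ≠ 0) →
        rayleighNum N p a b v (∑ i, c i • u i)
          / rayleighDen N a b (∑ i, c i • u i) ≤ (1 - p) * a ^ 2 * lam1)
    ∧ nuMinMax N p a b v m ≤ (1 - p) * a ^ 2 * lam1
    ∧ Tendsto (fun q : ℝ => (1 - q) * a ^ 2 * lam1) atTop atBot := by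
  classical
  -- basic facts
  have hb0 : 0 < b := ha.trans hab
  have hxpos : ∀ x ∈ Set.Ioo a b, 0 < x := fun x hx => ha.trans hx.1
  have hxbd : ∀ x ∈ Set.Ioo a b, |x ^ (N - 1)| ≤ b ^ (N - 1) := by
    intro x hx
    rw [abs_pow]
    exact pow_le_pow_left₀ (abs_nonneg x) (by rw [abs_of_pos (hxpos x hx)]; exact hx.2.le) _
  have hxbd4 : ∀ x ∈ Set.Ioo a b, |x ^ (N - 1) / x ^ 2| ≤ b ^ (N - 1) / a ^ 2 := by
    intro x hx
    have hx0 := hxpos x hx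
    rw [abs_div, abs_pow, abs_pow, abs_of_pos hx0]
    exact div_le_div₀ (by positivity) (pow_le_pow_left₀ hx0.le hx.2.le _) (by positivity)
      (by nlinarith [hx.1])
  -- continuity/bounds for the pieces
  have hcontu : ∀ j, ContinuousOn (u j) (Set.Ioo a b) :=
    fun j => (huH j).1.continuousOn.mono Ioo_subset_Icc_self
  have hbu : ∀ j, ∃ C, 0 ≤ C ∧ ∀ x ∈ Set.Ioo a b, |u j x| ≤ C :=
    fun j => L_bdd (huH j).1.continuousOn
  have hcd : ∀ j, ContinuousOn (deriv (u j)) (Set.Ioo a b) :=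
    fun j => (L_deriv_cont hab (huH j).1).1
  have hbd : ∀ j, ∃ C, 0 ≤ C ∧ ∀ x ∈ Set.Ioo a b, |deriv (u j) x| ≤ C :=
    fun j => (L_deriv_cont hab (huH j).1).2
  -- the four basic integrable families
  have hint1 : ∀ j, IntegrableOn (fun x => x ^ (N - 1) * (deriv (u j) x) ^ 2) (Set.Ioo a b) := by
    intro j
    obtain ⟨C, hC0, hC⟩ := hbd j
    refine L_integrable ((continuous_pow _).continuousOn.mul ((hcd j).pow 2))
      (C := b ^ (N - 1) * C ^ 2) ?_
    exact fun x hx => L_mul_bound (hxbd x hx) (L_sq_bound (hC x hx))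
  have hint2 : ∀ j, IntegrableOn (fun x => x ^ (N - 1) * |u j x| ^ (p + 1)) (Set.Ioo a b) := by
    intro j
    obtain ⟨C, hC0, hC⟩ := hbu j
    refine L_integrable ((continuous_pow _).continuousOn.mul
      (((hcontu j).abs).rpow_const (fun x _ => Or.inr (by linarith))))
      (C := b ^ (N - 1) * C ^ (p + 1)) ?_
    intro x hx
    refine L_mul_bound (hxbd x hx) ?_
    rw [abs_of_nonneg (Real.rpow_nonneg (abs_nonneg _) _)]
    exact Real.rpow_le_rpow (abs_nonneg _) (hC x hx) (by linarith)
  have hint3 : ∀ j, IntegrableOn (fun x => x ^ (N - 1) * (u j x) ^ 2) (Set.Ioo a b) := by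
    intro j
    obtain ⟨C, hC0, hC⟩ := hbu j
    refine L_integrable ((continuous_pow _).continuousOn.mul ((hcontu j).pow 2))
      (C := b ^ (N - 1) * C ^ 2) ?_
    exact fun x hx => L_mul_bound (hxbd x hx) (L_sq_bound (hC x hx))
  have hcont4 : ContinuousOn (fun x : ℝ => x ^ (N - 1) / x ^ 2) (Set.Ioo a b) :=
    (continuous_pow _).continuousOn.div (continuous_pow _).continuousOn
      (fun x hx => pow_ne_zero _ (ne_of_gt (hxpos x hx)))
  have hint4 : ∀ j, IntegrableOn (fun x => (x ^ (N - 1) / x ^ 2) * (u j x) ^ 2) (Set.Ioo a b) := by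
    intro j
    obtain ⟨C, hC0, hC⟩ := hbu j
    refine L_integrable (hcont4.mul ((hcontu j).pow 2)) (C := (b ^ (N - 1) / a ^ 2) * C ^ 2) ?_
    exact fun x hx => L_mul_bound (hxbd4 x hx) (L_sq_bound (hC x hx))
  -- structure of points
  have hgood : ∀ x ∈ Set.Ioo a b, x ∉ Set.range r → ∃ j : Fin m,
      x ∈ Set.Ioo (r j.castSucc) (r j.succ) ∧
      ∀ y ∈ Set.Ioo (r j.castSucc) (r j.succ), ∀ j', j' ≠ j → u j' y = 0 := by
    intro x hx hxr
    obtain ⟨j, hj⟩ := L_key r hr0 hrm hmono hx hxr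
    refine ⟨j, hj, fun y hy j' hj' => ?_⟩
    by_contra h0
    exact L_disj r hmono hj' hy (hsupp j' h0)
  -- good points for each index
  have hpt : ∀ i : Fin m, ∃ x, x ∈ Set.Ioo a b ∧ u i x ≠ 0 ∧ x ∉ Set.range r ∧
      ∀ᶠ y in nhds x, u i y ≠ 0 := by
    intro i
    obtain ⟨z, hz⟩ := Function.ne_iff.mp (hu0 i)
    have hzsupp : z ∈ Function.support (u i) := hz
    have hzIcc : z ∈ Set.Icc a b := by
      have h1 := hsupp i hzsupp
      refine ⟨le_trans ?_ h1.1, le_trans h1.2 ?_⟩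
      · rw [← hr0]; exact hmono.monotone (Fin.zero_le _)
      · rw [← hrm]; exact hmono.monotone (Fin.le_last _)
    have hzIoo : z ∈ Set.Ioo a b := by
      refine ⟨lt_of_le_of_ne hzIcc.1 ?_, lt_of_le_of_ne hzIcc.2 ?_⟩
      · intro h; exact hz (h ▸ (huH i).2.1)
      · intro h; exact hz (h ▸ (huH i).2.2.1)
    have hca : ContinuousAt (u i) z :=
      (huH i).1.continuousOn.continuousAt (Icc_mem_nhds hzIoo.1 hzIoo.2)
    have hev : {y | u i y ≠ 0} ∩ Set.Ioo a b ∈ nhds z := by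
      refine Filter.inter_mem (hca.eventually_ne hz) (Ioo_mem_nhds hzIoo.1 hzIoo.2)
    obtain ⟨ε, hε, hball⟩ := Metric.mem_nhds_iff.mp hev
    have hne : ((Metric.ball z ε) \ Set.range r).Nonempty := by
      refine Set.Infinite.nonempty (Set.Infinite.diff ?_ (Set.finite_range r))
      rw [Real.ball_eq_Ioo]
      exact Set.Ioo_infinite (by linarith)
    obtain ⟨x, hx1, hx2⟩ := hne
    have hx3 := hball hx1
    refine ⟨x, hx3.2, hx3.1, hx2, ?_⟩
    have hca' : ContinuousAt (u i) x :=
      (huH i).1.continuousOn.continuousAt (Icc_mem_nhds hx3.2.1 hx3.2.2)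
    exact hca'.eventually_ne hx3.1
  -- positivity of the denominator pieces
  have hD4nonneg : ∀ j, 0 ≤ ∫ x in Set.Ioo a b, (x ^ (N - 1) / x ^ 2) * (u j x) ^ 2 := by
    intro j
    refine setIntegral_nonneg measurableSet_Ioo (fun x hx => ?_)
    have := hxpos x hx
    positivity
  have hD4pos : ∀ j, 0 < ∫ x in Set.Ioo a b, (x ^ (N - 1) / x ^ 2) * (u j x) ^ 2 := by
    intro j
    obtain ⟨x₀, hx₀, hux₀, _, hev⟩ := hpt j
    refine L_pos_int hx₀ (hint4 j) (fun x hx => by have := hxpos x hx; positivity) ?_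
    filter_upwards [hev, Ioo_mem_nhds hx₀.1 hx₀.2] with y hy1 hy2
    have hy0 := hxpos y hy2
    have h1 : 0 < y ^ (N - 1) / y ^ 2 := by positivity
    have h2 : 0 < (u j y) ^ 2 := pow_two_pos_of_ne_zero hy1
    positivity
  -- the ae filter
  have hae : ∀ᵐ x ∂(volume.restrict (Set.Ioo a b)), x ∈ Set.Ioo a b ∧ x ∉ Set.range r := by
    have h1 : ∀ᵐ x ∂(volume.restrict (Set.Ioo a b)), x ∈ Set.Ioo a b :=
      ae_restrict_mem measurableSet_Ioo
    have h2 : ∀ᵐ x ∂(volume.restrict (Set.Ioo a b)), x ∉ Set.range r := by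
      refine ae_restrict_of_ae ?_
      exact measure_eq_zero_iff_ae_notMem.mp ((Set.finite_range r).measure_zero _)
    exact h1.and h2
  -- Part 1
  have part1 : ∀ c : Fin m → ℝ, (∃ i, c i ≠ 0) →
      rayleighNum N p a b v (∑ i, c i • u i)
        / rayleighDen N a b (∑ i, c i • u i) ≤ (1 - p) * a ^ 2 * lam1 := by
    intro c hc
    obtain ⟨i, hci⟩ := hc
    set φ := ∑ j, c j • u j with hφdef
    have hφx : ∀ x, φ x = ∑ j, c j * u j x := by
      intro x; rw [hφdef]; simp [Finset.sum_apply]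
    have hφH : memH10 a b φ := by
      refine ⟨?_, ?_, ?_, ?_⟩
      · exact ContDiffOn.congr (ContDiffOn.sum (fun j _ => (contDiffOn_const.mul (huH j).1)))
          (fun x _ => hφx x)
      · rw [hφx]; exact Finset.sum_eq_zero fun j _ => by rw [(huH j).2.1, mul_zero]
      · rw [hφx]; exact Finset.sum_eq_zero fun j _ => by rw [(huH j).2.2.1, mul_zero]
      · intro x hx
        rw [hφx]; exact Finset.sum_eq_zero fun j _ => by rw [(huH j).2.2.2 x hx, mul_zero]
    have hφgood : ∀ x, x ∈ Set.Ioo a b → x ∉ Set.range r → ∃ j : Fin m,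
        (φ x = c j * u j x) ∧ (deriv φ x = c j * deriv (u j) x) ∧
        (∀ j', j' ≠ j → u j' x = 0 ∧ deriv (u j') x = 0) ∧
        (u j x ≠ 0 → |v x| = |u j x|) := by
      intro x hx hxr
      obtain ⟨j, hxj, hvan⟩ := hgood x hx hxr
      have hnhds : Set.Ioo (r j.castSucc) (r j.succ) ∈ nhds x := isOpen_Ioo.mem_nhds hxj
      have hev : φ =ᶠ[nhds x] fun y => c j * u j y := by
        filter_upwards [hnhds] with y hy
        rw [hφx]
        exact Finset.sum_eq_single j (fun j' _ hj' => by rw [hvan y hy j' hj', mul_zero])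
          (fun h => absurd (Finset.mem_univ j) h)
      refine ⟨j, ?_, ?_, ?_, fun h => hvu j x h⟩
      · exact hev.self_of_nhds
      · rw [hev.deriv_eq]
        exact deriv_const_mul (c j) (L_diffAt hx (huH j).1)
      · intro j' hj'
        have hev' : u j' =ᶠ[nhds x] fun _ => (0:ℝ) := by
          filter_upwards [hnhds] with y hy using hvan y hy j' hj'
        exact ⟨hvan x hxj j' hj', by rw [hev'.deriv_eq]; exact deriv_const x 0⟩
    -- the four a.e. identities
    have haeQ : (fun x => x ^ (N - 1) * ((deriv φ x) ^ 2 - p * |v x| ^ (p - 1) * (φ x) ^ 2))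
        =ᵐ[volume.restrict (Set.Ioo a b)]
        (fun x => ∑ j, (c j) ^ 2 * ((x ^ (N - 1) * (deriv (u j) x) ^ 2)
          - p * (x ^ (N - 1) * |u j x| ^ (p + 1)))) := by
      filter_upwards [hae] with x hx
      obtain ⟨j, hval, hder, hvan, hvx⟩ := hφgood x hx.1 hx.2
      rw [Finset.sum_eq_single j]
      rotate_left
      · intro j' _ hj'
        obtain ⟨h0, h0'⟩ := hvan j' hj'
        rw [h0, h0']
        simp [Real.zero_rpow (by linarith : p + 1 ≠ 0)]
      · exact fun h => absurd (Finset.mem_univ j) h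
      rw [hval, hder]
      rcases eq_or_ne (u j x) 0 with h0 | h0
      · rw [h0]
        simp only [abs_zero, Real.zero_rpow (by linarith : p + 1 ≠ 0), mul_zero, zero_pow,
          sub_zero]
        ring
      · rw [hvx h0]
        have habs : |u j x| ^ (p - 1) * (u j x) ^ 2 = |u j x| ^ (p + 1) := by
          rw [← sq_abs, ← Real.rpow_natCast |u j x| 2, ← Real.rpow_add (abs_pos.mpr h0)]
          congr 1
          push_cast
          ring
        linear_combination (-(p * x ^ (N - 1) * (c j) ^ 2)) * habs
    have haeG : (fun x => x ^ (N - 1) * (deriv φ x) ^ 2)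
        =ᵐ[volume.restrict (Set.Ioo a b)]
        (fun x => ∑ j, (c j) ^ 2 * (x ^ (N - 1) * (deriv (u j) x) ^ 2)) := by
      filter_upwards [hae] with x hx
      obtain ⟨j, hval, hder, hvan, hvx⟩ := hφgood x hx.1 hx.2
      rw [hder, Finset.sum_eq_single j]
      · ring
      · intro j' _ hj'
        rw [(hvan j' hj').2]; ring
      · exact fun h => absurd (Finset.mem_univ j) h
    have haeP : (fun x => x ^ (N - 1) * (φ x) ^ 2)
        =ᵐ[volume.restrict (Set.Ioo a b)]
        (fun x => ∑ j, (c j) ^ 2 * (x ^ (N - 1) * (u j x) ^ 2)) := by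
      filter_upwards [hae] with x hx
      obtain ⟨j, hval, hder, hvan, hvx⟩ := hφgood x hx.1 hx.2
      rw [hval, Finset.sum_eq_single j]
      · ring
      · intro j' _ hj'
        rw [(hvan j' hj').1]; ring
      · exact fun h => absurd (Finset.mem_univ j) h
    have haeD : (fun x => (x ^ (N - 1) / x ^ 2) * (φ x) ^ 2)
        =ᵐ[volume.restrict (Set.Ioo a b)]
        (fun x => ∑ j, (c j) ^ 2 * ((x ^ (N - 1) / x ^ 2) * (u j x) ^ 2)) := by
      filter_upwards [hae] with x hx
      obtain ⟨j, hval, hder, hvan, hvx⟩ := hφgood x hx.1 hx.2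
      rw [hval, Finset.sum_eq_single j]
      · ring
      · intro j' _ hj'
        rw [(hvan j' hj').1]; ring
      · exact fun h => absurd (Finset.mem_univ j) h
    -- compute the integrals
    set T := ∑ j, (c j) ^ 2 * ∫ x in Set.Ioo a b, x ^ (N - 1) * (deriv (u j) x) ^ 2 with hTdef
    have hintsumQ : ∀ j : Fin m, j ∈ Finset.univ → Integrable (fun x =>
        (c j) ^ 2 * ((x ^ (N - 1) * (deriv (u j) x) ^ 2)
          - p * (x ^ (N - 1) * |u j x| ^ (p + 1)))) (volume.restrict (Set.Ioo a b)) := by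
      intro j _
      have h1 : Integrable (fun x => x ^ (N - 1) * (deriv (u j) x) ^ 2
          - p * (x ^ (N - 1) * |u j x| ^ (p + 1))) (volume.restrict (Set.Ioo a b)) :=
        (hint1 j).sub ((hint2 j).const_mul p)
      exact h1.const_mul _
    have hQeq : rayleighNum N p a b v φ = (1 - p) * T := by
      unfold rayleighNum
      rw [integral_congr_ae haeQ, integral_finset_sum _ hintsumQ, hTdef, Finset.mul_sum]
      refine Finset.sum_congr rfl (fun j _ => ?_)
      rw [integral_const_mul, integral_sub (hint1 j) ((hint2 j).const_mul p),
        integral_const_mul, ← hnehari j]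
      ring
    have hGeq : (∫ x in Set.Ioo a b, x ^ (N - 1) * (deriv φ x) ^ 2) = T := by
      rw [integral_congr_ae haeG, integral_finset_sum _ (fun j _ => (hint1 j).const_mul _), hTdef]
      exact Finset.sum_congr rfl fun j _ => integral_const_mul _ _
    have hintP : IntegrableOn (fun x => x ^ (N - 1) * (φ x) ^ 2) (Set.Ioo a b) :=
      (integrable_finset_sum _ (fun j _ => (hint3 j).const_mul _)).congr haeP.symm
    have hintD : IntegrableOn (fun x => (x ^ (N - 1) / x ^ 2) * (φ x) ^ 2) (Set.Ioo a b) :=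
      (integrable_finset_sum _ (fun j _ => (hint4 j).const_mul _)).congr haeD.symm
    have hDeq : rayleighDen N a b φ
        = ∑ j, (c j) ^ 2 * ∫ x in Set.Ioo a b, (x ^ (N - 1) / x ^ 2) * (u j x) ^ 2 := by
      unfold rayleighDen
      rw [integral_congr_ae haeD, integral_finset_sum _ (fun j _ => (hint4 j).const_mul _)]
      exact Finset.sum_congr rfl fun j _ => integral_const_mul _ _
    have hDpos : 0 < rayleighDen N a b φ := by
      rw [hDeq]
      have hterm : 0 < (c i) ^ 2 * ∫ x in Set.Ioo a b, (x ^ (N - 1) / x ^ 2) * (u i x) ^ 2 :=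
        mul_pos (pow_two_pos_of_ne_zero hci) (hD4pos i)
      exact lt_of_lt_of_le hterm (Finset.single_le_sum
        (f := fun j => (c j) ^ 2 * ∫ x in Set.Ioo a b, (x ^ (N - 1) / x ^ 2) * (u j x) ^ 2)
        (fun j _ => mul_nonneg (sq_nonneg _) (hD4nonneg j)) (Finset.mem_univ i))
    have h1 : a ^ 2 * rayleighDen N a b φ ≤ ∫ x in Set.Ioo a b, x ^ (N - 1) * (φ x) ^ 2 := by
      unfold rayleighDen
      rw [← integral_const_mul]
      refine setIntegral_mono_on (hintD.const_mul _) hintP measurableSet_Ioo (fun x hx => ?_)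
      have hx0 := hxpos x hx
      have hle : a ^ 2 / x ^ 2 ≤ 1 := (div_le_one (by positivity)).mpr (by nlinarith [hx.1])
      calc a ^ 2 * (x ^ (N - 1) / x ^ 2 * (φ x) ^ 2)
          = (a ^ 2 / x ^ 2) * (x ^ (N - 1) * (φ x) ^ 2) := by ring
        _ ≤ 1 * (x ^ (N - 1) * (φ x) ^ 2) :=
            mul_le_mul_of_nonneg_right hle (by positivity)
        _ = x ^ (N - 1) * (φ x) ^ 2 := one_mul _
    have h2 : lam1 * ∫ x in Set.Ioo a b, x ^ (N - 1) * (φ x) ^ 2 ≤ T :=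
      hGeq ▸ hpoincare φ hφH
    have h3 : a ^ 2 * lam1 * rayleighDen N a b φ ≤ T := by
      nlinarith [mul_le_mul_of_nonneg_left h1 hlam.le]
    rw [div_le_iff₀ hDpos, hQeq]
    calc (1 - p) * T ≤ (1 - p) * (a ^ 2 * lam1 * rayleighDen N a b φ) :=
          mul_le_mul_of_nonpos_left h3 (by linarith)
      _ = (1 - p) * a ^ 2 * lam1 * rayleighDen N a b φ := by ring
  -- linear independence of the u's
  have hLI : LinearIndependent ℝ u := by
    rw [Fintype.linearIndependent_iff]
    intro g hg i
    obtain ⟨x, hxI, hux, hxr, _⟩ := hpt i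
    obtain ⟨j, hxj, hvan⟩ := hgood x hxI hxr
    have hij : i = j := by
      by_contra hne
      exact hux (hvan x hxj i hne)
    subst hij
    have hx0 : (∑ j, g j • u j) x = 0 := by rw [hg]; rfl
    rw [Finset.sum_apply] at hx0
    simp only [Pi.smul_apply, smul_eq_mul] at hx0
    rw [Finset.sum_eq_single i (fun j' _ hj' => by rw [hvan x hxj j' hj', mul_zero])
      (fun h => absurd (Finset.mem_univ i) h)] at hx0
    exact (mul_eq_zero.mp hx0).resolve_right hux
  -- a uniform lower bound for Rayleigh quotients of H¹₀ functions
  obtain ⟨Cv, hCv0, hCv⟩ := L_bdd hv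
  set M := Cv ^ (p - 1) with hMdef
  have hM0 : 0 ≤ M := Real.rpow_nonneg hCv0 _
  have hM : ∀ x ∈ Set.Ioo a b, |v x| ^ (p - 1) ≤ M :=
    fun x hx => Real.rpow_le_rpow (abs_nonneg _) (hCv x hx) (by linarith)
  have hLB : ∀ ψ : ℝ → ℝ, memH10 a b ψ →
      -(p * M * b ^ 2) ≤ rayleighNum N p a b v ψ / rayleighDen N a b ψ := by
    intro ψ hψ
    have hcψ : ContinuousOn ψ (Set.Ioo a b) := hψ.1.continuousOn.mono Ioo_subset_Icc_self
    obtain ⟨Cψ, hCψ0, hCψ⟩ := L_bdd hψ.1.continuousOn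
    have hcdψ := (L_deriv_cont hab hψ.1).1
    obtain ⟨Cd, hCd0, hCd⟩ := (L_deriv_cont hab hψ.1).2
    have hDnn : 0 ≤ rayleighDen N a b ψ := by
      refine setIntegral_nonneg measurableSet_Ioo (fun x hx => ?_)
      have := hxpos x hx
      positivity
    have hcontv : ContinuousOn (fun x => |v x| ^ (p - 1)) (Set.Ioo a b) :=
      ((hv.mono Ioo_subset_Icc_self).abs).rpow_const (fun x _ => Or.inr (by linarith))
    have hg1 : IntegrableOn (fun x => x ^ (N - 1) * (deriv ψ x) ^ 2) (Set.Ioo a b) :=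
      L_integrable ((continuous_pow _).continuousOn.mul (hcdψ.pow 2))
        (C := b ^ (N - 1) * Cd ^ 2) (fun x hx => L_mul_bound (hxbd x hx) (L_sq_bound (hCd x hx)))
    have hg2 : IntegrableOn (fun x => x ^ (N - 1) * (p * |v x| ^ (p - 1) * (ψ x) ^ 2))
        (Set.Ioo a b) := by
      refine L_integrable ((continuous_pow _).continuousOn.mul
        ((continuousOn_const.mul hcontv).mul (hcψ.pow 2)))
        (C := b ^ (N - 1) * (p * M * Cψ ^ 2)) (fun x hx => L_mul_bound (hxbd x hx) ?_)
      rw [abs_mul, abs_mul, abs_of_pos (by linarith : (0:ℝ) < p),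
        abs_of_nonneg (Real.rpow_nonneg (abs_nonneg _) _)]
      exact mul_le_mul (mul_le_mul le_rfl (hM x hx) (Real.rpow_nonneg (abs_nonneg _) _)
        (by linarith)) (L_sq_bound (hCψ x hx)) (abs_nonneg _)
        (by positivity)
    have hg3 : IntegrableOn (fun x => (x ^ (N - 1) / x ^ 2) * (ψ x) ^ 2) (Set.Ioo a b) :=
      L_integrable (hcont4.mul (hcψ.pow 2)) (C := (b ^ (N - 1) / a ^ 2) * Cψ ^ 2)
        (fun x hx => L_mul_bound (hxbd4 x hx) (L_sq_bound (hCψ x hx)))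
    have hQsplit : rayleighNum N p a b v ψ
        = (∫ x in Set.Ioo a b, x ^ (N - 1) * (deriv ψ x) ^ 2)
          - ∫ x in Set.Ioo a b, x ^ (N - 1) * (p * |v x| ^ (p - 1) * (ψ x) ^ 2) := by
      unfold rayleighNum
      rw [← integral_sub hg1 hg2]
      exact integral_congr_ae (ae_of_all _ (fun x => by ring))
    have hI1 : 0 ≤ ∫ x in Set.Ioo a b, x ^ (N - 1) * (deriv ψ x) ^ 2 := by
      refine setIntegral_nonneg measurableSet_Ioo (fun x hx => ?_)
      have := hxpos x hx
      positivity
    have hI2 : (∫ x in Set.Ioo a b, x ^ (N - 1) * (p * |v x| ^ (p - 1) * (ψ x) ^ 2))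
        ≤ p * M * b ^ 2 * rayleighDen N a b ψ := by
      unfold rayleighDen
      rw [← integral_const_mul]
      refine setIntegral_mono_on hg2 (hg3.const_mul _) measurableSet_Ioo (fun x hx => ?_)
      have hx0 := hxpos x hx
      have e1 : x ^ (N - 1) ≤ b ^ 2 * (x ^ (N - 1) / x ^ 2) := by
        rw [mul_div_assoc', le_div_iff₀ (by positivity)]
        have hx2 : x ^ 2 ≤ b ^ 2 := by nlinarith [hx.2]
        calc x ^ (N - 1) * x ^ 2 ≤ x ^ (N - 1) * b ^ 2 :=
              mul_le_mul_of_nonneg_left hx2 (pow_nonneg hx0.le _)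
          _ = b ^ 2 * x ^ (N - 1) := by ring
      calc x ^ (N - 1) * (p * |v x| ^ (p - 1) * ψ x ^ 2)
          = |v x| ^ (p - 1) * (p * ψ x ^ 2 * x ^ (N - 1)) := by ring
        _ ≤ M * (p * ψ x ^ 2 * x ^ (N - 1)) := by
            refine mul_le_mul_of_nonneg_right (hM x hx) (by positivity)
        _ = (p * M * ψ x ^ 2) * x ^ (N - 1) := by ring
        _ ≤ (p * M * ψ x ^ 2) * (b ^ 2 * (x ^ (N - 1) / x ^ 2)) := by
            refine mul_le_mul_of_nonneg_left e1 (by positivity)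
        _ = p * M * b ^ 2 * (x ^ (N - 1) / x ^ 2 * ψ x ^ 2) := by ring
    have hQge : -(p * M * b ^ 2 * rayleighDen N a b ψ) ≤ rayleighNum N p a b v ψ := by
      rw [hQsplit]
      linarith
    rcases hDnn.eq_or_lt with hD0 | hD0
    · rw [← hD0, div_zero]
      have : 0 ≤ p * M * b ^ 2 := by positivity
      linarith
    · rw [le_div_iff₀ hD0]
      calc -(p * M * b ^ 2) * rayleighDen N a b ψ
          = -(p * M * b ^ 2 * rayleighDen N a b ψ) := by ring
        _ ≤ rayleighNum N p a b v ψ := hQge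
  -- the min-max bound
  have hnu : nuMinMax N p a b v m ≤ (1 - p) * a ^ 2 * lam1 := by
    unfold nuMinMax
    have hmem : (1 - p) * a ^ 2 * lam1 ∈ { t : ℝ | ∃ ψ : Fin m → ℝ → ℝ,
        (∀ i, memH10 a b (ψ i)) ∧ LinearIndependent ℝ ψ
        ∧ ∀ c : Fin m → ℝ, (∑ i, c i • ψ i) ≠ 0 →
          rayleighNum N p a b v (∑ i, c i • ψ i)
            / rayleighDen N a b (∑ i, c i • ψ i) ≤ (1 - p) * a ^ 2 * lam1 } := by
      refine ⟨u, huH, hLI, fun c hc => part1 c ?_⟩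
      by_contra h
      push_neg at h
      exact hc (Finset.sum_eq_zero fun j _ => by rw [h j, zero_smul])
    refine csInf_le ⟨-(p * M * b ^ 2), ?_⟩ hmem
    rintro t ⟨ψ, hψH, hψLI, hψt⟩
    set i₀ : Fin m := ⟨0, hm⟩ with hi₀
    have h1 : (∑ i, (fun i => if i = i₀ then (1:ℝ) else 0) i • ψ i) = ψ i₀ := by
      rw [Finset.sum_eq_single i₀ (fun j _ hj => by simp [hj]) 
        (fun h => absurd (Finset.mem_univ i₀) h)]
      simp
    have hne : ψ i₀ ≠ 0 := hψLI.ne_zero i₀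
    have ht := hψt _ (h1 ▸ hne)
    rw [h1] at ht
    exact le_trans (hLB (ψ i₀) (hψH i₀)) ht
  -- the limit
  refine ⟨part1, hnu, ?_⟩
  have h1 : Tendsto (fun q : ℝ => 1 - q) atTop atBot := by
    simpa [sub_eq_add_neg] using tendsto_atBot_add_const_left atTop (1:ℝ) tendsto_neg_atTop_atBot
  have h2 : Tendsto (fun q : ℝ => (1 - q) * (a ^ 2 * lam1)) atTop atBot :=
    h1.atBot_mul_const (by positivity)
  simpa [mul_assoc] using h2
end
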